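/- Let (G,ω) be an edge-weighted connected planar graph, T a spanning tree with dual tree T~ in (G*, ω*). For every edge e ∈ T with dual edge e* = PQ, the congestion satisfies C(G,T,e,ω) = ω(e) + ω*(℘_{e*}), where ℘_{e*} is the unique path in T~ joining P and Q and ω*(℘) is the sum of dual weights along ℘. -/

import Mathlib

open Classical

noncomputable section CongestionDefs

variable {V : Type*} [Fintype V] [DecidableEq V]

/-- Weighted congestion of an edge `e` of a spanning tree `T` of `G`: total weight of
edges of `G` whose endpoints are separated in `T` with `e` removed. -/
def edgeCongestion (G T : SimpleGraph V) (ω : Sym2 V → ℝ) (e : Sym2 V) : ℝ :=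
  ∑ f : Sym2 V,
    if f ∈ G.edgeSet ∧ ∃ a b : V, f = s(a, b) ∧ ¬ (T.deleteEdges {e}).Reachable a b
    then ω f else 0

/-- The `L^p` congestion of a spanning tree `T` (for a natural `p ≥ 1`). -/
def treeCong (G T : SimpleGraph V) (ω : Sym2 V → ℝ) (p : ℕ) : ℝ :=
  (∑ e : Sym2 V, if e ∈ T.edgeSet then (edgeCongestion G T ω e) ^ p else 0) ^ ((1 : ℝ) / p)

/-- The `L^∞` congestion of a spanning tree `T`. -/
def treeCongTop (G T : SimpleGraph V) (ω : Sym2 V → ℝ) : ℝ :=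
  ⨆ e ∈ T.edgeSet, edgeCongestion G T ω e

/-- `T` is a spanning tree of `G`. -/
def IsSpanningTree (G T : SimpleGraph V) : Prop := T ≤ G ∧ T.IsTree

/-- The `L^p` spanning tree congestion of `(G, ω)`. -/
def graphCong (G : SimpleGraph V) (ω : Sym2 V → ℝ) (p : ℕ) : ℝ :=
  sInf {x | ∃ T : SimpleGraph V, IsSpanningTree G T ∧ treeCong G T ω p = x}

/-- The `L^∞` spanning tree congestion of `(G, ω)`. -/
def graphCongTop (G : SimpleGraph V) (ω : Sym2 V → ℝ) : ℝ :=
  sInf {x | ∃ T : SimpleGraph V, IsSpanningTree G T ∧ treeCongTop G T ω = x}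

/-- Total weight of (the edges of) a graph. -/
def totalWeight (T : SimpleGraph V) (ρ : Sym2 V → ℝ) : ℝ :=
  ∑ e : Sym2 V, if e ∈ T.edgeSet then ρ e else 0

end CongestionDefs

section DualDefs

variable {V F : Type*}

/-- `s` is the edge set of a cycle of `G`. -/
def IsCycleEdgeSet (G : SimpleGraph V) (s : Set (Sym2 V)) : Prop :=
  ∃ (u : V) (c : G.Walk u u), c.IsCycle ∧ s = {e | e ∈ c.edges}

/-- `s` is a bond (minimal edge cut) of the connected graph `G`: deleting `s` disconnects
`G`, and deleting any proper subset of `s` does not. -/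
def IsBond (G : SimpleGraph F) (s : Set (Sym2 F)) : Prop :=
  s ⊆ G.edgeSet ∧ ¬(G.deleteEdges s).Connected ∧
    ∀ t : Set (Sym2 F), t ⊂ s → (G.deleteEdges t).Connected

/-- `(Gd, d)` is an (abstract, i.e. Whitney) dual of the planar graph `G`: `d` maps the
edges of `G` bijectively onto the edges of `Gd`, and the edge sets of cycles of `G`
correspond exactly to the bonds of `Gd`. -/
def IsPlanarDual (G : SimpleGraph V) (Gd : SimpleGraph F) (d : Sym2 V → Sym2 F) : Prop :=
  Set.InjOn d G.edgeSet ∧ d '' G.edgeSet = Gd.edgeSet ∧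
    ∀ s ⊆ G.edgeSet, IsCycleEdgeSet G s ↔ IsBond Gd (d '' s)

/-- The dual tree of a spanning subgraph `T` of `G`: the subgraph of the dual graph
generated by the duals of the edges of `G` not in `T`. -/
def dualTree (G T : SimpleGraph V) (d : Sym2 V → Sym2 F) : SimpleGraph F :=
  SimpleGraph.fromEdgeSet (d '' (G.edgeSet \ T.edgeSet))

end DualDefs


section AuxLemmas

open SimpleGraph

variable {F : Type*}

private lemma aux_reach_insert (Gd : SimpleGraph F) (s : Set (Sym2 F)) (z : Sym2 F) (c c' : F)
    (hz : z = s(c, c')) (hcc : (Gd.deleteEdges (insert z s)).Reachable c c') :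
    ∀ {x y : F}, (Gd.deleteEdges s).Reachable x y →
      (Gd.deleteEdges (insert z s)).Reachable x y := by
  intro x y hxy
  obtain ⟨w⟩ := hxy
  induction w with
  | nil => exact Reachable.refl _
  | @cons x b y h w ih =>
    rw [SimpleGraph.deleteEdges_adj] at h
    by_cases hzq : s(x, b) = z
    · rw [hz] at hzq
      rcases Sym2.eq_iff.mp hzq with ⟨rfl, rfl⟩ | ⟨rfl, rfl⟩
      · exact hcc.trans ih
      · exact hcc.symm.trans ih
    · refine (SimpleGraph.Adj.reachable ?_).trans ih
      rw [SimpleGraph.deleteEdges_adj]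
      exact ⟨h.1, by simp [Set.mem_insert_iff, hzq, h.2]⟩

private lemma aux_bond_not_reach (Gd : SimpleGraph F) (B : Set (Sym2 F)) (hB : IsBond Gd B)
    {z : Sym2 F} (hzB : z ∈ B) {c c' : F} (hz : z = s(c, c')) :
    ¬ (Gd.deleteEdges B).Reachable c c' := by
  intro hcc
  have hsub : B \ {z} ⊂ B := Set.sdiff_singleton_ssubset.mpr hzB
  have hconn := hB.2.2 _ hsub
  have hins : insert z (B \ {z}) = B := by
    rw [Set.insert_diff_singleton, Set.insert_eq_self.mpr hzB]
  have hcc' : (Gd.deleteEdges (insert z (B \ {z}))).Reachable c c' := by rwa [hins]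
  have hne : Nonempty F := hconn.nonempty
  refine absurd (SimpleGraph.Connected.mk fun x y => ?_) hB.2.1
  have := aux_reach_insert Gd (B \ {z}) z c c' hz hcc' (hconn.preconnected x y)
  rwa [hins] at this

private lemma aux_parity [DecidableEq F] (Gd : SimpleGraph F) (B : Set (Sym2 F)) (z : Sym2 F) (c c' : F)
    (hz : z = s(c, c')) (hcc : ¬ (Gd.deleteEdges B).Reachable c c')
    {x y : F} (w : Gd.Walk x y) (hall : ∀ t ∈ w.edges, t ∈ B → t = z) :
    (Even (w.edges.count z) → (Gd.deleteEdges B).Reachable x y) ∧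
    (Odd (w.edges.count z) →
      ((Gd.deleteEdges B).Reachable x c ∧ (Gd.deleteEdges B).Reachable c' y) ∨
      ((Gd.deleteEdges B).Reachable x c' ∧ (Gd.deleteEdges B).Reachable c y)) := by
  induction w with
  | nil =>
    refine ⟨fun _ => Reachable.refl _, fun hodd => ?_⟩
    simp [SimpleGraph.Walk.edges_nil] at hodd
  | @cons x b y h w ih =>
    have hall' : ∀ t ∈ w.edges, t ∈ B → t = z := fun t ht htB =>
      hall t (by simp [SimpleGraph.Walk.edges_cons, ht]) htB
    obtain ⟨ihEven, ihOdd⟩ := ih hall'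
    by_cases he : s(x, b) = z
    · have hcount : (SimpleGraph.Walk.cons h w).edges.count z = w.edges.count z + 1 := by
        rw [SimpleGraph.Walk.edges_cons, he, List.count_cons_self]
      rw [hz] at he
      rcases Sym2.eq_iff.mp he with ⟨rfl, rfl⟩ | ⟨rfl, rfl⟩
      · constructor
        · intro hEven
          rw [hcount, Nat.even_add_one, Nat.not_even_iff_odd] at hEven
          rcases ihOdd hEven with ⟨h1, _⟩ | ⟨_, h2⟩
          · exact absurd h1.symm hcc
          · exact h2
        · intro hOdd
          rw [hcount, Nat.odd_add_one, Nat.not_odd_iff_even] at hOdd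
          exact Or.inl ⟨Reachable.refl _, ihEven hOdd⟩
      · constructor
        · intro hEven
          rw [hcount, Nat.even_add_one, Nat.not_even_iff_odd] at hEven
          rcases ihOdd hEven with ⟨_, h2⟩ | ⟨h1, _⟩
          · exact h2
          · exact absurd h1 hcc
        · intro hOdd
          rw [hcount, Nat.odd_add_one, Nat.not_odd_iff_even] at hOdd
          exact Or.inr ⟨Reachable.refl _, ihEven hOdd⟩
    · have hnB : s(x, b) ∉ B := fun hmem =>
        he (hall _ (by simp [SimpleGraph.Walk.edges_cons]) hmem)
      have hadj : (Gd.deleteEdges B).Adj x b := by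
        rw [SimpleGraph.deleteEdges_adj]; exact ⟨h, hnB⟩
      have hcount : (SimpleGraph.Walk.cons h w).edges.count z = w.edges.count z := by
        rw [SimpleGraph.Walk.edges_cons, List.count_cons_of_ne he]
      constructor
      · intro hEven
        rw [hcount] at hEven
        exact hadj.reachable.trans (ihEven hEven)
      · intro hOdd
        rw [hcount] at hOdd
        rcases ihOdd hOdd with ⟨h1, h2⟩ | ⟨h1, h2⟩
        · exact Or.inl ⟨hadj.reachable.trans h1, h2⟩
        · exact Or.inr ⟨hadj.reachable.trans h1, h2⟩

private lemma aux_edges_mapLe {W : Type*} {G G' : SimpleGraph W} (h : G ≤ G') {u v : W}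
    (w : G.Walk u v) : (w.mapLe h).edges = w.edges := by
  simp only [SimpleGraph.Walk.mapLe, SimpleGraph.Walk.edges_map]
  have : Sym2.map ⇑(SimpleGraph.Hom.ofLE h) = id := by
    funext t
    refine Sym2.ind (fun a b => ?_) t
    simp [SimpleGraph.Hom.ofLE_apply]
  rw [this, List.map_id]

end AuxLemmas

/-- Edge congestion in a weighted connected planar graph, via the dual tree: for an edge
`e` of a spanning tree `T` with dual edge `e* = PQ`, the congestion of `e` equals
`ω(e)` plus the dual weight of the unique path in the dual tree joining `P` and `Q`. -/
theorem edgeCongestion_eq_dual_path {V F : Type*} [Fintype V] [DecidableEq V]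
    [Fintype F] [DecidableEq F]
    (G : SimpleGraph V) (hG : G.Connected) (ω : Sym2 V → ℝ)
    (Gd : SimpleGraph F) (d : Sym2 V → Sym2 F) (hdual : IsPlanarDual G Gd d)
    (ωd : Sym2 F → ℝ) (hωd : ∀ f ∈ G.edgeSet, ωd (d f) = ω f)
    (T : SimpleGraph V) (hT : IsSpanningTree G T)
    (e : Sym2 V) (he : e ∈ T.edgeSet)
    (P Q : F) (hPQ : d e = s(P, Q))
    (p : (dualTree G T d).Walk P Q) (hp : p.IsPath) :
    edgeCongestion G T ω e = ω e + (p.edges.map ωd).sum := by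
  classical
  obtain ⟨hTG, hTree⟩ := hT
  have heG : e ∈ G.edgeSet := SimpleGraph.edgeSet_mono hTG he
  -- the dual tree is a subgraph of the dual graph
  have hdle : dualTree G T d ≤ Gd := by
    intro v w hvw
    rw [dualTree, SimpleGraph.fromEdgeSet_adj] at hvw
    obtain ⟨⟨g, hg, hgeq⟩, _⟩ := hvw
    have : d g ∈ Gd.edgeSet := hdual.2.1 ▸ Set.mem_image_of_mem d hg.1
    rw [hgeq] at this
    exact (SimpleGraph.mem_edgeSet _).mp this
  set pG : Gd.Walk P Q := p.mapLe hdle with hpGdef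
  have hpG_edges : pG.edges = p.edges := aux_edges_mapLe hdle p
  have hpmem : ∀ t ∈ p.edges, ∃ g, g ∈ G.edgeSet ∧ g ∉ T.edgeSet ∧ d g = t := by
    intro t ht
    have := p.edges_subset_edgeSet ht
    rw [dualTree, SimpleGraph.edgeSet_fromEdgeSet] at this
    obtain ⟨⟨g, hg, rfl⟩, -⟩ := this
    exact ⟨g, hg.1, hg.2, rfl⟩
  have hdeGd : d e ∈ Gd.edgeSet := hdual.2.1 ▸ Set.mem_image_of_mem d heG
  have hAdjPQ : Gd.Adj P Q := by
    rw [← SimpleGraph.mem_edgeSet, ← hPQ]; exact hdeGd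
  have hdep : d e ∉ p.edges := by
    intro ht
    obtain ⟨g, hgG, hgT, hgd⟩ := hpmem _ ht
    exact hgT (by rwa [hdual.1 hgG heG hgd])
  -- key characterization for non-tree edges
  have key : ∀ (a b : V), G.Adj a b → s(a, b) ∉ T.edgeSet →
      (¬ (T.deleteEdges {e}).Reachable a b ↔ d s(a, b) ∈ p.edges) := by
    intro a b hab hfT
    obtain ⟨q0⟩ := hTree.isConnected.preconnected b a
    set qq : T.Path b a := q0.toPath with hqqdef
    set qw : T.Walk b a := qq.val with hqwdef
    have hqwPath : qw.IsPath := qq.2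
    have hfq : s(a, b) ∉ qw.edges := fun hmem => hfT (qw.edges_subset_edgeSet hmem)
    set qG : G.Walk b a := qw.mapLe hTG with hqGdef
    have hqG_edges : qG.edges = qw.edges := aux_edges_mapLe hTG qw
    have hcyc : (SimpleGraph.Walk.cons hab qG).IsCycle := by
      rw [SimpleGraph.Walk.cons_isCycle_iff]
      exact ⟨hqwPath.mapLe _, by rw [hqG_edges]; exact hfq⟩
    set s0 : Set (Sym2 V) := {x | x ∈ (SimpleGraph.Walk.cons hab qG).edges} with hs0def
    have hs0sub : s0 ⊆ G.edgeSet := fun x hx => SimpleGraph.Walk.edges_subset_edgeSet _ hx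
    have hbond : IsBond Gd (d '' s0) := (hdual.2.2 s0 hs0sub).mp ⟨a, _, hcyc, rfl⟩
    set B : Set (Sym2 F) := d '' s0 with hBdef
    have hs0mem : ∀ x, x ∈ s0 ↔ x = s(a, b) ∨ x ∈ qw.edges := by
      intro x
      simp [hs0def, SimpleGraph.Walk.edges_cons, hqG_edges]
    have hBint : ∀ t ∈ p.edges, t ∈ B → t = d s(a, b) := by
      intro t ht htB
      obtain ⟨g, hgG, hgT, rfl⟩ := hpmem t ht
      obtain ⟨g2, hg2s, hg2d⟩ := htB
      have hg2G : g2 ∈ G.edgeSet := hs0sub hg2s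
      have hgg : g2 = g := hdual.1 hg2G hgG hg2d
      rw [hgg] at hg2s
      rcases (hs0mem g).mp hg2s with hgf | hgq
      · rw [hgf]
      · exact absurd (qw.edges_subset_edgeSet hgq) hgT
    have step1 : ¬ (T.deleteEdges {e}).Reachable a b ↔ e ∈ qw.edges := by
      constructor
      · intro hnr
        by_contra hne
        refine hnr ?_
        have hw := qw.toDeleteEdges {e} (fun x hx => by
          simp only [Set.mem_singleton_iff]
          rintro rfl
          exact hne hx)
        exact ⟨hw.reverse⟩
      · intro heq hr
        obtain ⟨w1⟩ := hr
        set w1p : (T.deleteEdges {e}).Path a b := w1.toPath with hw1pdef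
        set P1 : T.Path a b := ⟨(w1p.val).mapLe (T.deleteEdges_le {e}), w1p.2.mapLe _⟩
          with hP1def
        set P2 : T.Path a b := qq.reverse with hP2def
        have hPeq : P1 = P2 := hTree.IsAcyclic.path_unique P1 P2
        have he2 : e ∈ P2.val.edges := by
          rw [hP2def]
          simp only [SimpleGraph.Path.reverse, SimpleGraph.Walk.edges_reverse,
            List.mem_reverse]
          exact heq
        rw [← hPeq] at he2
        have he3 : e ∈ (w1p.val).edges := by
          rw [hP1def] at he2
          rwa [aux_edges_mapLe] at he2
        have hmem := SimpleGraph.Walk.edges_subset_edgeSet _ he3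
        rw [SimpleGraph.edgeSet_deleteEdges] at hmem
        exact hmem.2 rfl
    have step2 : e ∈ qw.edges ↔ d s(a, b) ∈ p.edges := by
      constructor
      · intro heq
        by_contra hdfp
        have hdeB : d e ∈ B := Set.mem_image_of_mem d ((hs0mem e).mpr (Or.inr heq))
        have hsep := aux_bond_not_reach Gd B hbond hdeB hPQ
        have hall : ∀ t ∈ pG.edges, t ∈ B → t = d e := by
          rw [hpG_edges]
          intro t ht htB
          exact absurd (hBint t ht htB ▸ ht) hdfp
        have hcount : pG.edges.count (d e) = 0 := by
          rw [hpG_edges]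
          exact List.count_eq_zero_of_not_mem hdep
        exact hsep ((aux_parity Gd B (d e) P Q hPQ hsep pG hall).1
          (by rw [hcount]; exact Even.zero))
      · intro hdfp
        by_contra heq
        have hes0 : e ∉ s0 := by
          rw [hs0mem]
          rintro (hfe | hq)
          · rw [hfe] at he; exact hfT he
          · exact heq hq
        have hdeB : d e ∉ B := by
          rintro ⟨g, hgs, hgd⟩
          exact hes0 (by rwa [hdual.1 (hs0sub hgs) heG hgd] at hgs)
        have hdfB : d s(a, b) ∈ B := Set.mem_image_of_mem d ((hs0mem _).mpr (Or.inl rfl))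
        obtain ⟨c, c2, hcc2⟩ : ∃ c c2, d s(a, b) = s(c, c2) :=
          Sym2.ind (fun c c2 => ⟨c, c2, rfl⟩) (d s(a, b))
        have hsep := aux_bond_not_reach Gd B hbond hdfB hcc2
        have hall : ∀ t ∈ pG.edges, t ∈ B → t = d s(a, b) := by
          rw [hpG_edges]; exact hBint
        have hcount : pG.edges.count (d s(a, b)) = 1 := by
          rw [hpG_edges]
          exact List.count_eq_one_of_mem hp.isTrail.edges_nodup hdfp
        have hdisj := (aux_parity Gd B (d s(a, b)) c c2 hcc2 hsep pG hall).2
          (by rw [hcount]; exact odd_one)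
        have hPQreach : (Gd.deleteEdges B).Reachable P Q := by
          refine SimpleGraph.Adj.reachable ?_
          rw [SimpleGraph.deleteEdges_adj]
          refine ⟨hAdjPQ, ?_⟩
          rw [← hPQ]; exact hdeB
        rcases hdisj with ⟨h1, h2⟩ | ⟨h1, h2⟩
        · exact hsep (h1.symm.trans (hPQreach.trans h2.symm))
        · exact hsep (h2.trans (hPQreach.symm.trans h1))
    exact step1.trans step2
  -- full characterization of the congestion condition
  have hchar : ∀ f : Sym2 V,
      ((f ∈ G.edgeSet ∧ ∃ a b : V, f = s(a, b) ∧ ¬ (T.deleteEdges {e}).Reachable a b)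
      ↔ (f = e ∨ (f ∈ G.edgeSet ∧ f ∉ T.edgeSet ∧ d f ∈ p.edges))) := by
    intro f
    constructor
    · rintro ⟨hfG, a, b, rfl, hnr⟩
      by_cases hfT : s(a, b) ∈ T.edgeSet
      · left
        by_contra hfe
        refine hnr (SimpleGraph.Adj.reachable ?_)
        rw [SimpleGraph.deleteEdges_adj]
        exact ⟨(SimpleGraph.mem_edgeSet _).mp hfT, by simp [hfe]⟩
      · exact Or.inr ⟨hfG, hfT, (key a b ((SimpleGraph.mem_edgeSet _).mp hfG) hfT).mp hnr⟩
    · rintro (rfl | ⟨hfG, hfT, hdfp⟩)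
      · refine ⟨heG, ?_⟩
        obtain ⟨a, b, he0⟩ : ∃ a b, f = s(a, b) := Sym2.ind (fun a b => ⟨a, b, rfl⟩) f
        refine ⟨a, b, he0, ?_⟩
        have hbr : T.IsBridge f :=
          SimpleGraph.isAcyclic_iff_forall_edge_isBridge.mp hTree.IsAcyclic he
        rw [he0, SimpleGraph.isBridge_iff] at hbr
        have h2 : ¬(T.deleteEdges {s(a, b)}).Reachable a b := hbr
        rw [he0]
        exact h2
      · obtain ⟨a, b, hfab⟩ : ∃ a b, f = s(a, b) := Sym2.ind (fun a b => ⟨a, b, rfl⟩) f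
        subst hfab
        exact ⟨hfG, a, b, rfl,
          (key a b ((SimpleGraph.mem_edgeSet _).mp hfG) hfT).mpr hdfp⟩
  -- now sum up
  set S2 : Finset (Sym2 V) :=
    Finset.univ.filter (fun f => f ∈ G.edgeSet ∧ f ∉ T.edgeSet ∧ d f ∈ p.edges) with hS2def
  have hsum : edgeCongestion G T ω e = ∑ f ∈ insert e S2, ω f := by
    rw [edgeCongestion]
    have h1 : ∀ f : Sym2 V,
        (if f ∈ G.edgeSet ∧ ∃ a b : V, f = s(a, b) ∧ ¬ (T.deleteEdges {e}).Reachable a b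
          then ω f else 0)
        = (if f ∈ insert e S2 then ω f else 0) := by
      intro f
      have hmem : f ∈ insert e S2 ↔
          (f = e ∨ (f ∈ G.edgeSet ∧ f ∉ T.edgeSet ∧ d f ∈ p.edges)) := by
        simp [hS2def, Finset.mem_insert, Finset.mem_filter]
      exact if_congr ((hchar f).trans hmem.symm) rfl rfl
    rw [Finset.sum_congr rfl fun f _ => h1 f, Finset.sum_ite_mem, Finset.univ_inter]
  have heS2 : e ∉ S2 := by simp [hS2def, he]
  rw [hsum, Finset.sum_insert heS2]
  congr 1
  have hnodup := hp.isTrail.edges_nodup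
  have hms : (p.edges.map ωd).sum = ∑ x ∈ p.edges.toFinset, ωd x :=
    (List.sum_toFinset _ hnodup).symm
  have himg : p.edges.toFinset = S2.image d := by
    ext x
    simp only [List.mem_toFinset, Finset.mem_image, hS2def, Finset.mem_filter,
      Finset.mem_univ, true_and]
    constructor
    · intro hx
      obtain ⟨g, hgG, hgT, hgd⟩ := hpmem x hx
      exact ⟨g, ⟨hgG, hgT, by rwa [hgd]⟩, hgd⟩
    · rintro ⟨g, ⟨_, _, hgp⟩, rfl⟩
      exact hgp
  have hinj : ∀ x ∈ S2, ∀ y ∈ S2, d x = d y → x = y := fun x hx y hy hxy =>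
    hdual.1 (Finset.mem_filter.mp hx).2.1 (Finset.mem_filter.mp hy).2.1 hxy
  rw [hms, himg, Finset.sum_image hinj]
  exact Finset.sum_congr rfl fun g hg => (hωd g (Finset.mem_filter.mp hg).2.1).symm
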